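/- Let F be a finite field with q elements and let n, k be natural numbers. The function σ_k on GL(n,F) defined by σ_k(g) = q^{k·r(g)} is positive definite: for every m, every g₁,…,g_m ∈ GL(n,F) and every c₁,…,c_m ∈ ℂ, the sum Σ_{i,j} c_i·conj(c_j)·q^{k·r(g_i·g_j^{-1})} is a real number ≥ 0. -/
import Mathlib


open scoped ComplexOrder

/-- The dimension of the space of vectors fixed by `g`, i.e. `r(g) = dim ker (g - 1)`. -/
noncomputable def fixedDim {F : Type*} [Field F] {n : ℕ}
    (g : GL (Fin n) F) : ℕ :=
  Module.finrank F (LinearMap.ker (Matrix.mulVecLin ((g : Matrix (Fin n) (Fin n) F) - 1)))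

lemma card_fixed_vectors {F : Type*} [Field F] [Fintype F] {n : ℕ} (q : ℕ)
    (hq : Fintype.card F = q) (g : GL (Fin n) F) :
    Nat.card {v : Fin n → F // (g : Matrix (Fin n) (Fin n) F).mulVec v = v}
      = q ^ fixedDim g := by
  classical
  have he : {v : Fin n → F // (g : Matrix (Fin n) (Fin n) F).mulVec v = v}
      ≃ LinearMap.ker (Matrix.mulVecLin ((g : Matrix (Fin n) (Fin n) F) - 1)) := by
    apply Equiv.subtypeEquiv (Equiv.refl _)
    intro v
    simp only [Equiv.refl_apply, LinearMap.mem_ker, Matrix.mulVecLin_apply,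
      Matrix.sub_mulVec, Matrix.one_mulVec, sub_eq_zero]
  rw [Nat.card_congr he, Nat.card_eq_fintype_card, ← hq, fixedDim]
  exact Module.card_eq_pow_finrank (K := F)

lemma card_fixed_tuples {F : Type*} [Field F] [Fintype F] {n : ℕ} (q k : ℕ)
    (hq : Fintype.card F = q) (g : GL (Fin n) F) :
    Nat.card {v : Fin k → Fin n → F //
        ∀ t, (g : Matrix (Fin n) (Fin n) F).mulVec (v t) = v t}
      = q ^ (k * fixedDim g) := by
  classical
  rw [Nat.card_congr (Equiv.subtypePiEquivPi (β := fun _ : Fin k => Fin n → F)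
      (p := fun _ u => (g : Matrix (Fin n) (Fin n) F).mulVec u = u)),
    Nat.card_pi]
  simp only [card_fixed_vectors q hq g, Finset.prod_const, Finset.card_univ, Fintype.card_fin]
  rw [← pow_mul, mul_comm]

/-- The Thoma character `σ_k(g) = q^(k * r(g))` is positive definite on `GL(n, F_q)`:
for all `g₁, …, g_m` and complex `c₁, …, c_m`, the sum
`Σ_{i,j} c_i * conj (c_j) * q^(k * r(g_i * g_j⁻¹))` is a nonnegative real number.
(Nonnegativity in the partial order of `ℂ` means exactly that the number is real and `≥ 0`.) -/
theorem thoma_character_posDef {F : Type*} [Field F] [Fintype F]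
    (q n k : ℕ) (hq : Fintype.card F = q)
    (m : ℕ) (g : Fin m → GL (Fin n) F) (c : Fin m → ℂ) :
    0 ≤ ∑ i : Fin m, ∑ j : Fin m,
        c i * (starRingEnd ℂ) (c j) * (q : ℂ) ^ (k * fixedDim (g i * (g j)⁻¹)) := by
  classical
  set X := (Fin k → Fin n → F) with hX
  set A : Fin m → X → X := fun i v t => ((g i)⁻¹ : GL (Fin n) F).val.mulVec (v t) with hA
  -- key counting identity
  have key : ∀ i j : Fin m, ((q : ℂ)) ^ (k * fixedDim (g i * (g j)⁻¹))
      = ∑ v : X, (if A i v = A j v then (1 : ℂ) else 0) := by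
    intro i j
    have hcard : Nat.card {v : X //
        ∀ t, ((g i * (g j)⁻¹ : GL (Fin n) F) : Matrix (Fin n) (Fin n) F).mulVec (v t) = v t}
        = q ^ (k * fixedDim (g i * (g j)⁻¹)) := card_fixed_tuples q k hq _
    have hiff : ∀ v : X,
        (∀ t, ((g i * (g j)⁻¹ : GL (Fin n) F) : Matrix (Fin n) (Fin n) F).mulVec (v t) = v t)
          ↔ A i v = A j v := by
      intro v
      constructor
      · intro h
        funext t
        have hg : (((g i)⁻¹ : GL (Fin n) F) : Matrix (Fin n) (Fin n) F) *
            ((g i * (g j)⁻¹ : GL (Fin n) F) : Matrix (Fin n) (Fin n) F)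
            = (((g j)⁻¹ : GL (Fin n) F) : Matrix (Fin n) (Fin n) F) := by
          rw [← Units.val_mul, inv_mul_cancel_left]
        calc A i v t = ((g i)⁻¹ : GL (Fin n) F).val.mulVec
              (((g i * (g j)⁻¹ : GL (Fin n) F) : Matrix (Fin n) (Fin n) F).mulVec (v t)) := by
              rw [h t]
          _ = A j v t := by rw [Matrix.mulVec_mulVec, hg]
      · intro h t
        have h1 : ((g i)⁻¹ : GL (Fin n) F).val.mulVec (v t)
            = ((g j)⁻¹ : GL (Fin n) F).val.mulVec (v t) := congrFun h t
        have hg : ((g i : GL (Fin n) F) : Matrix (Fin n) (Fin n) F) *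
            (((g j)⁻¹ : GL (Fin n) F) : Matrix (Fin n) (Fin n) F)
            = ((g i * (g j)⁻¹ : GL (Fin n) F) : Matrix (Fin n) (Fin n) F) :=
          (Units.val_mul _ _).symm
        have hg2 : ((g i : GL (Fin n) F) : Matrix (Fin n) (Fin n) F) *
            (((g i)⁻¹ : GL (Fin n) F) : Matrix (Fin n) (Fin n) F) = 1 := by
          rw [← Units.val_mul, mul_inv_cancel, Units.val_one]
        calc ((g i * (g j)⁻¹ : GL (Fin n) F) : Matrix (Fin n) (Fin n) F).mulVec (v t)
            = ((g i : GL (Fin n) F) : Matrix (Fin n) (Fin n) F).mulVec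
              (((g j)⁻¹ : GL (Fin n) F).val.mulVec (v t)) := by
              rw [Matrix.mulVec_mulVec, hg]
          _ = ((g i : GL (Fin n) F) : Matrix (Fin n) (Fin n) F).mulVec
              (((g i)⁻¹ : GL (Fin n) F).val.mulVec (v t)) := by rw [h1]
          _ = v t := by rw [Matrix.mulVec_mulVec, hg2, Matrix.one_mulVec]
    calc ((q : ℂ)) ^ (k * fixedDim (g i * (g j)⁻¹))
        = (Nat.card {v : X // ∀ t,
            ((g i * (g j)⁻¹ : GL (Fin n) F) : Matrix (Fin n) (Fin n) F).mulVec (v t) = v t} : ℂ) := by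
          rw [hcard]; push_cast; ring
      _ = ((Finset.univ.filter (fun v : X => A i v = A j v)).card : ℂ) := by
          rw [Nat.card_eq_fintype_card, Fintype.card_subtype]
          exact congrArg (fun t : Finset X => (t.card : ℂ))
            (Finset.filter_congr fun v _ => hiff v)
      _ = ∑ v : X, (if A i v = A j v then (1 : ℂ) else 0) := by
          rw [Finset.sum_boole]
  -- indicator function
  set f : X → X → ℂ := fun v w => ∑ i : Fin m, c i * (if A i v = w then (1:ℂ) else 0) with hf
  have hconj : ∀ (P : Prop) (_ : Decidable P),
      (starRingEnd ℂ) (if P then (1:ℂ) else 0) = (if P then (1:ℂ) else 0) := by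
    intro P hP; split <;> simp
  have h1 : ∀ v w : X, f v w * (starRingEnd ℂ) (f v w)
      = ∑ i : Fin m, ∑ j : Fin m, c i * (starRingEnd ℂ) (c j) *
          ((if A i v = w then (1:ℂ) else 0) * (if A j v = w then (1:ℂ) else 0)) := by
    intro v w
    rw [hf]
    simp only [map_sum, map_mul, hconj]
    rw [Finset.sum_mul_sum]
    exact Finset.sum_congr rfl fun i _ => Finset.sum_congr rfl fun j _ => by ring
  have h2 : ∀ i j : Fin m, ∀ v : X,
      ∑ w : X, (if A i v = w then (1:ℂ) else 0) * (if A j v = w then (1:ℂ) else 0)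
        = (if A i v = A j v then (1:ℂ) else 0) := by
    intro i j v
    rw [show (fun w : X => (if A i v = w then (1:ℂ) else 0) * (if A j v = w then (1:ℂ) else 0))
        = (fun w : X => if A i v = w then (if A j v = w then (1:ℂ) else 0) else 0) from
      funext fun w => by split <;> simp]
    rw [Finset.sum_ite_eq Finset.univ (A i v) (fun w => if A j v = w then (1:ℂ) else 0)]
    simp [eq_comm]
  have expand : ∑ i : Fin m, ∑ j : Fin m,
      c i * (starRingEnd ℂ) (c j) * (q : ℂ) ^ (k * fixedDim (g i * (g j)⁻¹))
      = ∑ v : X, ∑ w : X, f v w * (starRingEnd ℂ) (f v w) := by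
    calc ∑ i : Fin m, ∑ j : Fin m,
        c i * (starRingEnd ℂ) (c j) * (q : ℂ) ^ (k * fixedDim (g i * (g j)⁻¹))
        = ∑ i : Fin m, ∑ j : Fin m, ∑ v : X, ∑ w : X, c i * (starRingEnd ℂ) (c j) *
            ((if A i v = w then (1:ℂ) else 0) * (if A j v = w then (1:ℂ) else 0)) := by
          refine Finset.sum_congr rfl fun i _ => Finset.sum_congr rfl fun j _ => ?_
          rw [key i j, Finset.mul_sum]
          refine Finset.sum_congr rfl fun v _ => ?_
          rw [← h2 i j v, Finset.mul_sum]
      _ = ∑ v : X, ∑ w : X, ∑ i : Fin m, ∑ j : Fin m, c i * (starRingEnd ℂ) (c j) *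
            ((if A i v = w then (1:ℂ) else 0) * (if A j v = w then (1:ℂ) else 0)) := by
          calc ∑ i : Fin m, ∑ j : Fin m, ∑ v : X, ∑ w : X, c i * (starRingEnd ℂ) (c j) *
              ((if A i v = w then (1:ℂ) else 0) * (if A j v = w then (1:ℂ) else 0))
              = ∑ i : Fin m, ∑ v : X, ∑ j : Fin m, ∑ w : X, c i * (starRingEnd ℂ) (c j) *
              ((if A i v = w then (1:ℂ) else 0) * (if A j v = w then (1:ℂ) else 0)) :=
              Finset.sum_congr rfl fun i _ => Finset.sum_comm
            _ = ∑ v : X, ∑ i : Fin m, ∑ j : Fin m, ∑ w : X, c i * (starRingEnd ℂ) (c j) *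
              ((if A i v = w then (1:ℂ) else 0) * (if A j v = w then (1:ℂ) else 0)) :=
              Finset.sum_comm
            _ = ∑ v : X, ∑ i : Fin m, ∑ w : X, ∑ j : Fin m, c i * (starRingEnd ℂ) (c j) *
              ((if A i v = w then (1:ℂ) else 0) * (if A j v = w then (1:ℂ) else 0)) :=
              Finset.sum_congr rfl fun v _ => Finset.sum_congr rfl fun i _ => Finset.sum_comm
            _ = ∑ v : X, ∑ w : X, ∑ i : Fin m, ∑ j : Fin m, c i * (starRingEnd ℂ) (c j) *
              ((if A i v = w then (1:ℂ) else 0) * (if A j v = w then (1:ℂ) else 0)) :=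
              Finset.sum_congr rfl fun v _ => Finset.sum_comm
      _ = ∑ v : X, ∑ w : X, f v w * (starRingEnd ℂ) (f v w) := by
          refine Finset.sum_congr rfl fun v _ => Finset.sum_congr rfl fun w _ => (h1 v w).symm
  rw [expand]
  refine Finset.sum_nonneg fun v _ => Finset.sum_nonneg fun w _ => ?_
  rw [Complex.mul_conj]
  exact_mod_cast Complex.normSq_nonneg _
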